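/- Let G be a connected graph (with a loop at every vertex) of diameter at least r, where r ≡ 0 (mod 3) and r ≥ 6. If a vertex v satisfies |N^r(v)| < (r/3 + 1)·δ(G), then there exists a vertex at distance exactly r+1 from v. -/

import Mathlib

/-- The ball of radius `r` around `v` (the `r`-th neighbourhood `N^r(v)`). -/
def SimpleGraph.distBall {V : Type*} (G : SimpleGraph V) (r : ℕ) (v : V) : Set V :=
  {u : V | G.dist v u ≤ r}

lemma walk_segment {V : Type*} {G : SimpleGraph V} :
    ∀ {u v : V} (p : G.Walk u v) (i j : ℕ), i ≤ j →
    ∃ q : G.Walk (p.getVert i) (p.getVert j), q.length ≤ j - i := by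
  intro u v p
  induction p with
  | nil =>
    intro i j _
    exact ⟨(SimpleGraph.Walk.nil).copy rfl rfl, by simp⟩
  | cons h q ih =>
    intro i j hij
    match i, j with
    | 0, 0 => exact ⟨(SimpleGraph.Walk.nil).copy rfl rfl, by simp⟩
    | 0, (j+1) =>
      obtain ⟨q', hq'⟩ := ih 0 j (Nat.zero_le _)
      refine ⟨(SimpleGraph.Walk.cons h (q'.copy (SimpleGraph.Walk.getVert_zero q) rfl)).copy
        (SimpleGraph.Walk.getVert_zero _).symm (SimpleGraph.Walk.getVert_cons_succ q h).symm, ?_⟩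
      rw [SimpleGraph.Walk.length_copy]
      simpa using hq'
    | (i+1), (j+1) =>
      obtain ⟨q', hq'⟩ := ih i j (Nat.le_of_succ_le_succ hij)
      exact ⟨q'.copy (SimpleGraph.Walk.getVert_cons_succ q h).symm
        (SimpleGraph.Walk.getVert_cons_succ q h).symm, by simpa using hq'⟩

lemma dist_getVert_le {V : Type*} {G : SimpleGraph V} {u v : V} (p : G.Walk u v)
    (i j : ℕ) (hij : i ≤ j) : G.dist (p.getVert i) (p.getVert j) ≤ j - i := by
  obtain ⟨q, hq⟩ := walk_segment p i j hij
  exact le_trans (SimpleGraph.dist_le q) hq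

lemma dist_getVert_shortest {V : Type*} {G : SimpleGraph V} (hG : G.Connected) {u v : V}
    (p : G.Walk u v) (hp : p.length = G.dist u v) {i j : ℕ} (hij : i ≤ j) (hj : j ≤ p.length) :
    G.dist (p.getVert i) (p.getVert j) = j - i := by
  have h1 : G.dist u (p.getVert i) ≤ i := by
    simpa [SimpleGraph.Walk.getVert_zero] using dist_getVert_le p 0 i (Nat.zero_le _)
  have h2 : G.dist (p.getVert j) v ≤ p.length - j := by
    simpa [SimpleGraph.Walk.getVert_length] using dist_getVert_le p j p.length hj
  have hle := dist_getVert_le p i j hij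
  have htri : G.dist u v ≤ G.dist u (p.getVert i) + G.dist (p.getVert i) (p.getVert j)
      + G.dist (p.getVert j) v :=
    le_trans (hG.dist_triangle (v := p.getVert j))
      (by have := hG.dist_triangle (u := u) (v := p.getVert i) (w := p.getVert j); omega)
  omega

/-- in a connected graph with a loop at every vertex (so the minimum
degree counting loops is `G.minDegree + 1`), if `r ≡ 0 (mod 3)`, `r ≥ 6`,
`diam(G) ≥ r` and `v` is insufficient (i.e. `|N^r(v)| < (r/3 + 1)·δ`), then some
vertex is at distance exactly `r + 1` from `v`. -/
theorem edge_growth_insufficient_far_vertex {V : Type*} [Fintype V]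
    (G : SimpleGraph V) [DecidableRel G.Adj] (hG : G.Connected)
    (r : ℕ) (hr3 : r % 3 = 0) (hr : 6 ≤ r)
    (hdiam : ∃ u w : V, r ≤ G.dist u w)
    (v : V) (hins : (G.distBall r v).ncard < (r / 3 + 1) * (G.minDegree + 1)) :
    ∃ u : V, G.dist v u = r + 1 := by
  classical
  have hne : Nonempty V := ⟨v⟩
  by_contra hcon
  push_neg at hcon
  -- every vertex is within distance r of v
  have hball : ∀ u : V, G.dist v u ≤ r := by
    intro u
    by_contra hgt
    push_neg at hgt
    obtain ⟨p, hp⟩ := hG.exists_walk_length_eq_dist v u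
    have hj : r + 1 ≤ p.length := by omega
    have := dist_getVert_shortest hG p hp (Nat.zero_le (r + 1)) hj
    rw [SimpleGraph.Walk.getVert_zero] at this
    exact hcon _ (by simpa using this)
  have hU : G.distBall r v = Set.univ := by
    ext u; simpa [SimpleGraph.distBall] using hball u
  have hcard : (G.distBall r v).ncard = Fintype.card V := by
    rw [hU, Set.ncard_univ, Nat.card_eq_fintype_card]
  -- now get a lower bound on |V| using r/3+1 disjoint closed neighborhoods
  obtain ⟨u, w, hd⟩ := hdiam
  obtain ⟨p, hp⟩ := hG.exists_walk_length_eq_dist u w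
  set m := r / 3 with hm
  have hrm : r = 3 * m := by omega
  have hrlen : r ≤ p.length := by rw [hp]; exact hd
  set x : ℕ → V := fun i => p.getVert (3 * i) with hx
  have hdist : ∀ i j : ℕ, i < j → j ≤ m → 3 ≤ G.dist (x i) (x j) := by
    intro i j hij hjm
    have := dist_getVert_shortest hG p hp (i := 3 * i) (j := 3 * j)
      (by omega) (by omega)
    simp only [hx]
    omega
  set f : ℕ → Finset V := fun i => insert (x i) (G.neighborFinset (x i)) with hf
  have hcardf : ∀ i, G.minDegree + 1 ≤ (f i).card := by
    intro i
    rw [hf]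
    have : (x i) ∉ G.neighborFinset (x i) := by
      simp [SimpleGraph.mem_neighborFinset]
    rw [Finset.card_insert_of_notMem this]
    have := G.minDegree_le_degree (x i)
    rw [← SimpleGraph.card_neighborFinset_eq_degree] at this
    omega
  have hmem_dist : ∀ i (y : V), y ∈ f i → G.dist (x i) y ≤ 1 := by
    intro i y hy
    rw [hf] at hy
    simp only [Finset.mem_insert, SimpleGraph.mem_neighborFinset] at hy
    rcases hy with rfl | hy
    · rw [SimpleGraph.dist_self]; omega
    · exact le_of_eq ((SimpleGraph.dist_eq_one_iff_adj).2 hy)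
  have hdisj : ∀ i ∈ Finset.range (m + 1), ∀ j ∈ Finset.range (m + 1), i ≠ j →
      Disjoint (f i) (f j) := by
    intro i hi j hj hij
    rw [Finset.disjoint_left]
    intro y hyi hyj
    have h1 := hmem_dist i y hyi
    have h2 := hmem_dist j y hyj
    have htri : G.dist (x i) (x j) ≤ 2 := by
      have := hG.dist_triangle (u := x i) (v := y) (w := x j)
      rw [SimpleGraph.dist_comm (u := y)] at this
      omega
    simp only [Finset.mem_range] at hi hj
    rcases lt_or_gt_of_ne hij with h | h
    · have := hdist i j h (by omega); omega
    · have := hdist j i h (by omega)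
      rw [SimpleGraph.dist_comm] at this
      omega
  have hbig : (m + 1) * (G.minDegree + 1) ≤ Fintype.card V := by
    calc (m + 1) * (G.minDegree + 1)
        = ∑ i ∈ Finset.range (m + 1), (G.minDegree + 1) := by
          rw [Finset.sum_const, Finset.card_range, smul_eq_mul]
      _ ≤ ∑ i ∈ Finset.range (m + 1), (f i).card :=
          Finset.sum_le_sum (fun i _ => hcardf i)
      _ = ((Finset.range (m + 1)).biUnion f).card := (Finset.card_biUnion hdisj).symm
      _ ≤ Fintype.card V := Finset.card_le_card (Finset.subset_univ _) |>.trans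
          (by rw [Finset.card_univ])
  omega
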